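/- (Conditional variance of the DR-learner pseudo-outcome; Table 1, row 2) Let Z = (Y, X, A) with A ∈ {0,1}, π(X) = Pr(A = 1 | X) ∈ (0,1), κ(X) = 1 − π(X), ν(X) = π(X)κ(X), μ_a(X) = E(Y | X, A = a). If Var(Y | A, X) = σ² is constant, then Var( μ₁(X) − μ₀(X) + (A − π(X))/(π(X)κ(X)) · (Y − μ_A(X)) | X ) = σ² / ν(X) = σ² · κ(X)^{−1} π(X)^{−1}. -/

import Mathlib

open MeasureTheory ProbabilityTheory

noncomputable section

lemma aux_memL2_condExp {α : Type*} {m m0 : MeasurableSpace α} (hm : m ≤ m0)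
    {μ : Measure α} [IsFiniteMeasure μ] {f : α → ℝ} (hf : MemLp f 2 μ) :
    MemLp (μ[f|m]) 2 μ := by
  have h := ae_eq_condExp_of_forall_setIntegral_eq hm (hf.integrable one_le_two)
    (fun s _ _ => ((Lp.memLp ((condExpL2 ℝ ℝ hm (hf.toLp f) : lpMeas ℝ ℝ m 2 μ) : Lp ℝ 2 μ)).integrable one_le_two).integrableOn)
    (fun s hs hμs => by
      rw [integral_condExpL2_eq hm (hf.toLp f) hs hμs.ne]
      exact setIntegral_congr_ae (hm s hs) ((hf.coeFn_toLp).mono fun x hx _ => hx))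
    (lpMeas.aestronglyMeasurable _)
  exact (Lp.memLp _).ae_eq h

set_option maxHeartbeats 2000000 in
/-- (Conditional variance of the DR-learner pseudo-outcome; Table 1, row 2.)
Let `Z = (Y, X, A)` with `A ∈ {0,1}`, `π(X) = Pr(A = 1 | X) ∈ (0,1)`, `κ(X) = 1 − π(X)`,
`ν(X) = π(X)κ(X)`, `μ_a(X) = E(Y | X, A = a)`.  If `Var(Y | A, X) = σ²` is constant, then
`Var(μ₁(X) − μ₀(X) + (A − π(X))/(π(X)κ(X)) · (Y − μ_A(X)) | X) = σ²/ν(X)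
  = σ² κ(X)⁻¹ π(X)⁻¹`. -/
theorem condVar_DR_pseudo_outcome
    {Ω E : Type*} [MeasurableSpace Ω] [MeasurableSpace E]
    (μ : Measure Ω) [IsProbabilityMeasure μ]
    (X : Ω → E) (A Y : Ω → ℝ)
    (hX : Measurable X) (hA : Measurable A) (hYm : Measurable Y)
    (hY2 : MemLp Y 2 μ)
    (hA01 : ∀ ω, A ω = 0 ∨ A ω = 1)
    (pi kap nu mu0 mu1 : E → ℝ)
    (hpim : Measurable pi) (hmu0m : Measurable mu0) (hmu1m : Measurable mu1)
    (hpi01 : ∀ x, pi x ∈ Set.Ioo (0 : ℝ) 1)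
    (hkap : ∀ x, kap x = 1 - pi x)
    (hnu : ∀ x, nu x = pi x * kap x)
    -- π(X) = Pr(A = 1 | X)
    (hpidef : μ[A | MeasurableSpace.comap X inferInstance] =ᵐ[μ] fun ω => pi (X ω))
    -- μ_a(X) = E(Y | X, A = a), encoded via  E(Y | X, A) = A μ₁(X) + (1 − A) μ₀(X)
    (hmudef :
      μ[Y | MeasurableSpace.comap X inferInstance ⊔ MeasurableSpace.comap A inferInstance]
        =ᵐ[μ] fun ω => A ω * mu1 (X ω) + (1 - A ω) * mu0 (X ω))
    (σ2 : ℝ)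
    -- Var(Y | A, X) = σ² is constant
    (hvarY :
      μ[(fun ω => (Y ω - (A ω * mu1 (X ω) + (1 - A ω) * mu0 (X ω))) ^ 2) |
          MeasurableSpace.comap X inferInstance ⊔ MeasurableSpace.comap A inferInstance]
        =ᵐ[μ] fun _ => σ2)
    -- square-integrability of the DR pseudo-outcome
    (hfDR2 : MemLp
        (fun ω => mu1 (X ω) - mu0 (X ω) +
          (A ω - pi (X ω)) / (pi (X ω) * kap (X ω)) *
            (Y ω - (A ω * mu1 (X ω) + (1 - A ω) * mu0 (X ω)))) 2 μ) :
    (μ[(fun ω =>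
        ((mu1 (X ω) - mu0 (X ω) +
            (A ω - pi (X ω)) / (pi (X ω) * kap (X ω)) *
              (Y ω - (A ω * mu1 (X ω) + (1 - A ω) * mu0 (X ω)))) -
          (μ[(fun ω' => mu1 (X ω') - mu0 (X ω') +
              (A ω' - pi (X ω')) / (pi (X ω') * kap (X ω')) *
                (Y ω' - (A ω' * mu1 (X ω') + (1 - A ω') * mu0 (X ω')))) |
              MeasurableSpace.comap X inferInstance]) ω) ^ 2) |
      MeasurableSpace.comap X inferInstance]
      =ᵐ[μ] fun ω => σ2 / nu (X ω))
    ∧ (∀ x, σ2 / nu x = σ2 * (kap x)⁻¹ * (pi x)⁻¹) := by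
  classical
  rename_i mΩ mE hprob
  -- basic positivity facts
  have hπpos : ∀ x, 0 < pi x := fun x => (hpi01 x).1
  have hκpos : ∀ x, 0 < kap x := fun x => by rw [hkap]; linarith [(hpi01 x).2]
  have hπne : ∀ x, pi x ≠ 0 := fun x => (hπpos x).ne'
  have hκne : ∀ x, kap x ≠ 0 := fun x => (hκpos x).ne'
  constructor
  swap
  · intro x
    rw [hnu, div_eq_mul_inv, mul_inv]
    ring
  -- σ-algebras
  have hm := hX.comap_le
  have hA' := hA.comap_le
  set m : MeasurableSpace Ω := MeasurableSpace.comap X inferInstance with hm_def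
  set n : MeasurableSpace Ω := m ⊔ MeasurableSpace.comap A inferInstance with hn_def
  have hn := sup_le hm hA'
  have hmn : m ≤ n := le_sup_left
  -- functions
  set g : Ω → ℝ := fun ω => A ω * mu1 (X ω) + (1 - A ω) * mu0 (X ω) with hg_def
  set c : Ω → ℝ := fun ω => mu1 (X ω) - mu0 (X ω) with hc_def
  set w : Ω → ℝ := fun ω => (A ω - pi (X ω)) / (pi (X ω) * kap (X ω)) with hw_def
  set u : Ω → ℝ := fun ω => w ω * (Y ω - g ω) with hu_def
  set f : Ω → ℝ := fun ω => c ω + u ω with hf_def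
  show μ[(fun ω => (f ω - (μ[f|m]) ω) ^ 2)|m] =ᵐ[μ] fun ω => σ2 / nu (X ω)
  -- measurability
  have hXm : Measurable[m] X := fun s hs => ⟨s, hs, rfl⟩
  have hAn : Measurable[n] A :=
    (Measurable.of_comap_le le_rfl).mono le_sup_right le_rfl
  have hgm : Measurable[mΩ] g := by
    rw [hg_def]
    exact (hA.mul (hmu1m.comp hX)).add ((measurable_const.sub hA).mul (hmu0m.comp hX))
  have hκm : Measurable[mE] kap := by
    have : Measurable[mE] (fun x => (1:ℝ) - pi x) := measurable_const.sub hpim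
    simpa [funext hkap] using this
  have hwm : Measurable[mΩ] w := by
    rw [hw_def]
    exact (hA.sub (hpim.comp hX)).div ((hpim.comp hX).mul (hκm.comp hX))
  have hum : Measurable[mΩ] u := by
    rw [hu_def]; exact hwm.mul (hYm.sub hgm)
  have hwn : Measurable[n] w := by
    have hπn : Measurable[n] (fun ω => pi (X ω)) := (hpim.comp hXm).mono hmn le_rfl
    have hκn : Measurable[n] (fun ω => kap (X ω)) := by
      have : Measurable[n] (fun ω => (1 : ℝ) - pi (X ω)) := measurable_const.sub hπn
      simpa [hkap] using this
    exact (hAn.sub hπn).div (hπn.mul hκn)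
  -- integrability basics
  have hAint : Integrable A μ := by
    refine Integrable.mono' (integrable_const (1 : ℝ)) hA.aestronglyMeasurable ?_
    refine Filter.Eventually.of_forall fun ω => ?_
    rcases hA01 ω with h | h <;> simp [h]
  have hYint : Integrable Y μ := hY2.integrable one_le_two
  have hgint : Integrable g μ := integrable_condExp.congr hmudef
  have hg2 : MemLp g 2 μ := (aux_memL2_condExp hn hY2).ae_eq hmudef
  have hYg2 : MemLp (fun ω => Y ω - g ω) 2 μ := hY2.sub hg2
  have hYgint : Integrable (fun ω => Y ω - g ω) μ := hYint.sub hgint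
  have hYgsq : Integrable (fun ω => (Y ω - g ω) ^ 2) μ := hYg2.integrable_sq
  have hfint : Integrable f μ := hfDR2.integrable one_le_two
  -- E[Y - g | n] = 0
  have hYgcond : μ[(fun ω => Y ω - g ω)|n] =ᵐ[μ] 0 := by
    have h1 : μ[(fun ω => Y ω - g ω)|n] =ᵐ[μ] μ[Y|n] - μ[g|n] := condExp_sub hYint hgint _
    have h2 : μ[g|n] =ᵐ[μ] μ[Y|n] :=
      (condExp_congr_ae hmudef.symm).trans (condExp_condExp_of_le le_rfl hn)
    filter_upwards [h1, h2] with ω e1 e2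
    simp only [Pi.sub_apply, Pi.zero_apply] at *
    rw [e1, e2]; ring
  -- σ2 is nonnegative
  have hσ2int : ∫ ω, (Y ω - g ω) ^ 2 ∂μ = σ2 := by
    have h1 := integral_condExp hn (f := fun ω => (Y ω - g ω) ^ 2) (μ := μ)
    have h2 : ∫ ω, (μ[(fun ω => (Y ω - g ω) ^ 2)|n]) ω ∂μ = ∫ _ω, σ2 ∂μ :=
      integral_congr_ae hvarY
    rw [h1] at h2
    simpa using h2
  have hσ2 : 0 ≤ σ2 := hσ2int ▸ integral_nonneg fun ω => sq_nonneg _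
  -- localizing sets
  set B : ℕ → Set E := fun N =>
    {x | ((N : ℝ) + 1)⁻¹ ≤ pi x ∧ ((N : ℝ) + 1)⁻¹ ≤ kap x ∧ |mu1 x| ≤ (N : ℝ) ∧ |mu0 x| ≤ (N : ℝ)}
    with hB_def
  have hBmeas : ∀ N, MeasurableSet[mE] (B N) := by
    intro N
    rw [hB_def]
    simp only [Set.setOf_and]
    exact (measurableSet_le measurable_const hpim).inter
      ((measurableSet_le measurable_const hκm).inter
        ((measurableSet_le hmu1m.abs measurable_const).inter
          (measurableSet_le hmu0m.abs measurable_const)))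
  set s : ℕ → Set Ω := fun N => X ⁻¹' (B N) with hs_def
  have hsmm : ∀ N, MeasurableSet[m] (s N) := fun N => ⟨B N, hBmeas N, rfl⟩
  have hsnm : ∀ N, MeasurableSet[n] (s N) := fun N => hmn _ (hsmm N)
  have hsm : ∀ N, MeasurableSet[mΩ] (s N) := fun N => hm _ (hsmm N)
  have hcov : ∀ ω, ∃ N, X ω ∈ B N := by
    intro ω
    obtain ⟨N, hN⟩ := exists_nat_ge
      (max (max (pi (X ω))⁻¹ (kap (X ω))⁻¹) (max |mu1 (X ω)| |mu0 (X ω)|))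
    have h1 : (pi (X ω))⁻¹ ≤ (N : ℝ) + 1 := by
      have := le_trans (le_max_left _ _) (le_trans (le_max_left _ _) hN); linarith
    have h2 : (kap (X ω))⁻¹ ≤ (N : ℝ) + 1 := by
      have := le_trans (le_max_right _ _) (le_trans (le_max_left _ _) hN); linarith
    refine ⟨N, ?_, ?_, ?_, ?_⟩
    · rw [inv_le_comm₀ (by positivity) (hπpos _)]; exact h1
    · rw [inv_le_comm₀ (by positivity) (hκpos _)]; exact h2
    · exact le_trans (le_trans (le_max_left _ _) (le_max_right _ _)) hN
    · exact le_trans (le_trans (le_max_right _ _) (le_max_right _ _)) hN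
  -- bound for w on s N
  have hwb : ∀ N, ∀ ω, ω ∈ s N → |w ω| ≤ ((N : ℝ) + 1) ^ 2 := by
    intro N ω hω
    obtain ⟨hp, hk, -, -⟩ := hω
    have hNpos : (0 : ℝ) < (N : ℝ) + 1 := by positivity
    have hAb : |A ω - pi (X ω)| ≤ 1 := by
      have h01 := hpi01 (X ω)
      rcases hA01 ω with h | h <;> rw [h, abs_le] <;>
        constructor <;> simp at h01 ⊢ <;> linarith [h01.1, h01.2]
    have hν : (((N : ℝ) + 1) ^ 2)⁻¹ ≤ pi (X ω) * kap (X ω) := by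
      have := mul_le_mul hp hk (by positivity) (le_of_lt (hπpos (X ω)))
      calc (((N : ℝ) + 1) ^ 2)⁻¹ = ((N : ℝ) + 1)⁻¹ * ((N : ℝ) + 1)⁻¹ := by
            rw [sq, mul_inv]
        _ ≤ pi (X ω) * kap (X ω) := this
    have hνpos : 0 < pi (X ω) * kap (X ω) := mul_pos (hπpos _) (hκpos _)
    have : |w ω| = |A ω - pi (X ω)| / (pi (X ω) * kap (X ω)) := by
      rw [hw_def]; rw [abs_div, abs_of_pos hνpos]
    rw [this]
    rw [div_le_iff₀ hνpos]
    calc |A ω - pi (X ω)| ≤ 1 := hAb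
      _ ≤ ((N : ℝ) + 1) ^ 2 * (((N : ℝ) + 1) ^ 2)⁻¹ := by
          rw [mul_inv_cancel₀ (by positivity)]
      _ ≤ ((N : ℝ) + 1) ^ 2 * (pi (X ω) * kap (X ω)) := by
          apply mul_le_mul_of_nonneg_left hν (by positivity)
  -- key localization identity
  have hkey : ∀ N, (fun ω => (s N).indicator (μ[f|m]) ω)
      =ᵐ[μ] fun ω => (s N).indicator c ω := by
    intro N
    have hscm : StronglyMeasurable[m] ((s N).indicator c) := by
      refine Measurable.stronglyMeasurable ?_
      refine Measurable.indicator ?_ (hsmm N)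
      rw [hc_def]
      exact (hmu1m.comp hXm).sub (hmu0m.comp hXm)
    have hbc : Integrable ((s N).indicator c) μ := by
      refine (integrable_const ((N : ℝ) + (N : ℝ))).mono' ?_ ?_
      · refine (Measurable.indicator ?_ (hsm N)).aestronglyMeasurable
        rw [hc_def]
        exact (hmu1m.comp hX).sub (hmu0m.comp hX)
      · refine Filter.Eventually.of_forall fun ω => ?_
        by_cases hω : ω ∈ s N
        · rw [Set.indicator_of_mem hω, Real.norm_eq_abs, hc_def]
          obtain ⟨-, -, h1, h0⟩ := hω
          calc |mu1 (X ω) - mu0 (X ω)| ≤ |mu1 (X ω)| + |mu0 (X ω)| := abs_sub _ _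
            _ ≤ (N : ℝ) + (N : ℝ) := add_le_add h1 h0
        · rw [Set.indicator_of_notMem hω]
          simp only [norm_zero]
          positivity
    have hbu : Integrable ((s N).indicator u) μ := by
      refine ((hYgint.abs.const_mul (((N : ℝ) + 1) ^ 2)).mono' ?_ ?_)
      · exact (hum.indicator (hsm N)).aestronglyMeasurable
      · refine Filter.Eventually.of_forall fun ω => ?_
        by_cases hω : ω ∈ s N
        · rw [Set.indicator_of_mem hω, Real.norm_eq_abs, hu_def]
          simp only [abs_mul]
          apply mul_le_mul_of_nonneg_right (hwb N ω hω) (abs_nonneg _)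
        · rw [Set.indicator_of_notMem hω]
          simp only [norm_zero]
          positivity
    have hif : (s N).indicator f = (s N).indicator c + (s N).indicator u := by
      funext ω
      by_cases hω : ω ∈ s N <;> simp [Set.indicator, hω, hf_def]
    have h1 : μ[(s N).indicator f|m] =ᵐ[μ] (s N).indicator (μ[f|m]) :=
      condExp_indicator hfint (hsmm N)
    have h2 : μ[(s N).indicator c|m] = (s N).indicator c :=
      condExp_of_stronglyMeasurable hm hscm hbc
    have hiu : (s N).indicator u = (s N).indicator w * fun ω => Y ω - g ω := by
      funext ω
      by_cases hω : ω ∈ s N <;> simp [Set.indicator, hω, hu_def]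
    have h3 : μ[(s N).indicator u|n] =ᵐ[μ] 0 := by
      rw [hiu]
      refine (condExp_mul_of_stronglyMeasurable_left
        ((hwn.indicator (hsnm N)).stronglyMeasurable) ?_ hYgint).trans ?_
      · rw [← hiu]; exact hbu
      · filter_upwards [hYgcond] with ω hω
        simp only [Pi.mul_apply, Pi.zero_apply] at *
        rw [hω, mul_zero]
    have h4 : μ[(s N).indicator u|m] =ᵐ[μ] 0 := by
      refine (condExp_condExp_of_le hmn hn).symm.trans ?_
      refine (condExp_congr_ae h3).trans ?_
      rw [condExp_zero]
    have h6 : μ[(s N).indicator f|m] =ᵐ[μ] (s N).indicator c := by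
      rw [hif]
      refine (condExp_add hbc hbu _).trans ?_
      rw [h2]
      filter_upwards [h4] with ω hω
      simp only [Pi.add_apply, Pi.zero_apply] at *
      rw [hω, add_zero]
    exact h1.symm.trans h6
  -- conditional mean of f given X
  have hEf : μ[f|m] =ᵐ[μ] c := by
    filter_upwards [ae_all_iff.2 hkey] with ω hω
    obtain ⟨N, hN⟩ := hcov ω
    have hsN : ω ∈ s N := hN
    have := hω N
    rwa [Set.indicator_of_mem hsN, Set.indicator_of_mem hsN] at this
  -- restated hypotheses (definitional)
  have hvarY' : μ[(fun ω => (Y ω - g ω) ^ 2)|n] =ᵐ[μ] fun _ => σ2 := hvarY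
  -- centered square
  have hfm2 : MemLp (fun ω => f ω - (μ[f|m]) ω) 2 μ :=
    hfDR2.sub (aux_memL2_condExp hm hfDR2)
  have hfmint : Integrable (fun ω => (f ω - (μ[f|m]) ω) ^ 2) μ := hfm2.integrable_sq
  have hsq : (fun ω => (f ω - (μ[f|m]) ω) ^ 2) =ᵐ[μ] fun ω => u ω ^ 2 := by
    filter_upwards [hEf] with ω hω
    have hfω : f ω = c ω + u ω := rfl
    rw [hω, hfω]
    ring
  have hu2int : Integrable (fun ω => u ω ^ 2) μ := hfmint.congr hsq
  have hu2w : (fun ω => u ω ^ 2) = (fun ω => w ω ^ 2) * fun ω => (Y ω - g ω) ^ 2 := by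
    funext ω
    simp only [hu_def, Pi.mul_apply]
    ring
  have hw2n : Measurable[n] fun ω => w ω ^ 2 := by
    have := hwn.mul hwn
    simp only [sq]; exact this
  have hcondn : μ[(fun ω => u ω ^ 2)|n] =ᵐ[μ] fun ω => σ2 * w ω ^ 2 := by
    rw [hu2w]
    refine (condExp_mul_of_stronglyMeasurable_left hw2n.stronglyMeasurable ?_ hYgsq).trans ?_
    · rw [← hu2w]; exact hu2int
    · filter_upwards [hvarY'] with ω hω
      simp only [Pi.mul_apply]
      rw [hω, mul_comm]
  have hsw2int : Integrable (fun ω => σ2 * w ω ^ 2) μ := integrable_condExp.congr hcondn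
  -- values of w on the two treatment arms
  have hw1 : ∀ ω, A ω = 1 → w ω = 1 / pi (X ω) := by
    intro ω h
    have hκ1 : kap (X ω) = 1 - pi (X ω) := hkap _
    rw [hw_def]
    simp only [h, hκ1]
    have h1 : (1 : ℝ) - pi (X ω) ≠ 0 := by rw [← hκ1]; exact hκne _
    rw [div_eq_div_iff (mul_ne_zero (hπne _) h1) (hπne _)]
    ring
  have hw0 : ∀ ω, A ω = 0 → w ω = -(1 / kap (X ω)) := by
    intro ω h
    rw [hw_def]
    simp only [h, zero_sub]
    have hπ := hπne (X ω)
    have hκ := hκne (X ω)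
    field_simp
  -- decomposition of σ2 w² into the two arms
  have hdec : (fun ω => σ2 * w ω ^ 2)
      = (fun ω => σ2 / pi (X ω) ^ 2) * A + (fun ω => σ2 / kap (X ω) ^ 2) * fun ω => 1 - A ω := by
    funext ω
    simp only [Pi.add_apply, Pi.mul_apply]
    rcases hA01 ω with h | h
    · rw [hw0 ω h, h]
      field_simp
      ring
    · rw [hw1 ω h, h]
      field_simp
      ring
  -- integrability of each arm
  have hp1int : Integrable ((fun ω => σ2 / pi (X ω) ^ 2) * A) μ := by
    refine hsw2int.mono' ?_ ?_
    · exact ((measurable_const.div ((hpim.comp hX).pow_const 2)).mul hA).aestronglyMeasurable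
    · refine Filter.Eventually.of_forall fun ω => ?_
      simp only [Pi.mul_apply]
      rcases hA01 ω with h | h
      · rw [h, mul_zero, norm_zero]
        positivity
      · rw [h, mul_one, Real.norm_eq_abs, abs_of_nonneg (by positivity)]
        refine le_of_eq ?_
        rw [hw1 ω h]
        field_simp
  have hp2int : Integrable ((fun ω => σ2 / kap (X ω) ^ 2) * fun ω => 1 - A ω) μ := by
    refine hsw2int.mono' ?_ ?_
    · exact ((measurable_const.div ((hκm.comp hX).pow_const 2)).mul
        (measurable_const.sub hA)).aestronglyMeasurable
    · refine Filter.Eventually.of_forall fun ω => ?_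
      simp only [Pi.mul_apply]
      rcases hA01 ω with h | h
      · rw [h, sub_zero, mul_one, Real.norm_eq_abs, abs_of_nonneg (by positivity)]
        refine le_of_eq ?_
        rw [hw0 ω h]
        field_simp
      · rw [h, sub_self, mul_zero, norm_zero]
        positivity
  -- conditional expectations of each arm
  have hc1sm : StronglyMeasurable[m] fun ω => σ2 / pi (X ω) ^ 2 :=
    (measurable_const.div ((hpim.comp hXm).pow_const 2)).stronglyMeasurable
  have hc2sm : StronglyMeasurable[m] fun ω => σ2 / kap (X ω) ^ 2 :=
    (measurable_const.div ((hκm.comp hXm).pow_const 2)).stronglyMeasurable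
  have e1 : μ[((fun ω => σ2 / pi (X ω) ^ 2) * A)|m]
      =ᵐ[μ] (fun ω => σ2 / pi (X ω) ^ 2) * μ[A|m] :=
    condExp_mul_of_stronglyMeasurable_left hc1sm hp1int hAint
  have h1A : Integrable (fun ω => (1 : ℝ) - A ω) μ := (integrable_const 1).sub hAint
  have e2 : μ[((fun ω => σ2 / kap (X ω) ^ 2) * fun ω => 1 - A ω)|m]
      =ᵐ[μ] (fun ω => σ2 / kap (X ω) ^ 2) * μ[(fun ω => (1 : ℝ) - A ω)|m] :=
    condExp_mul_of_stronglyMeasurable_left hc2sm hp2int h1A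
  have eA' : μ[(fun ω => (1 : ℝ) - A ω)|m] =ᵐ[μ] fun ω => 1 - pi (X ω) := by
    have h0 : μ[(fun _ => (1 : ℝ)) - A|m] =ᵐ[μ] μ[(fun _ => (1 : ℝ))|m] - μ[A|m] :=
      condExp_sub (integrable_const 1) hAint _
    refine h0.trans ?_
    rw [condExp_const hm]
    filter_upwards [hpidef] with ω hω
    simp only [Pi.sub_apply]
    rw [hω]
  -- final chain
  refine (condExp_congr_ae hsq).trans ?_
  refine ((condExp_condExp_of_le hmn hn).symm.trans ?_)
  refine (condExp_congr_ae hcondn).trans ?_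
  rw [hdec]
  have hadd := condExp_add hp1int hp2int (m := m)
  refine hadd.trans ?_
  filter_upwards [e1, e2, hpidef, eA'] with ω he1 he2 hπω hAω
  simp only [Pi.add_apply, Pi.mul_apply] at he1 he2 ⊢
  rw [he1, he2, hπω, hAω]
  have hp := hπne (X ω)
  have hk := hκne (X ω)
  have hk' : (1 : ℝ) - pi (X ω) = kap (X ω) := (hkap _).symm
  rw [hk', hnu]
  have hsum : pi (X ω) + kap (X ω) = 1 := by rw [hkap]; ring
  field_simp
  linear_combination σ2 * hsum
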